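/- The bilinear antisymmetric bracket on ℝ⁷ determined by [e₁,e₂] = e₅, [e₁,e₃] = e₆ (all other brackets of basis vectors being zero) satisfies the Jacobi identity, so it defines a Lie algebra 𝔫₂, and the diagonal linear map D : ℝ⁷ → ℝ⁷ with D(e₁) = e₁, D(e₂) = (3/2)e₂, D(e₃) = (3/2)e₃, D(e₄) = 2e₄, D(e₅) = (5/2)e₅, D(e₆) = (5/2)e₆, D(e₇) = 2e₇ is a derivation of 𝔫₂, i.e. D[x,y] = [Dx,y] + [x,Dy] for all x, y ∈ ℝ⁷. -/

import Mathlib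

/-- The bilinear antisymmetric bracket of 𝔫₂: [e₁,e₂] = e₅, [e₁,e₃] = e₆
(0-based: [e₀,e₁] = e₄, [e₀,e₂] = e₅), all other basis brackets zero,
extended bilinearly. -/
def brN2 (x y : Fin 7 → ℝ) : Fin 7 → ℝ :=
  ![0, 0, 0, 0, x 0 * y 1 - x 1 * y 0, x 0 * y 2 - x 2 * y 0, 0]

/-- The diagonal linear map D with D(e₁) = e₁, D(e₂) = (3/2)e₂,
D(e₃) = (3/2)e₃, D(e₄) = 2e₄, D(e₅) = (5/2)e₅, D(e₆) = (5/2)e₆,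
D(e₇) = 2e₇. -/
noncomputable def DN2 (x : Fin 7 → ℝ) : Fin 7 → ℝ :=
  fun i => ![1, 3 / 2, 3 / 2, 2, 5 / 2, 5 / 2, 2] i * x i

/-- the bracket of 𝔫₂ satisfies the Jacobi identity (so 𝔫₂ is a
Lie algebra) and D is a derivation of 𝔫₂. -/
theorem N2_jacobi_and_derivation :
    (∀ x y z : Fin 7 → ℝ,
      brN2 (brN2 x y) z + brN2 (brN2 y z) x + brN2 (brN2 z x) y = 0) ∧
    (∀ x y : Fin 7 → ℝ, DN2 (brN2 x y) = brN2 (DN2 x) y + brN2 x (DN2 y)) := by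
  constructor
  · intro x y z
    funext i
    fin_cases i <;> norm_num [brN2, Matrix.cons_val_succ, Matrix.cons_val_two, Matrix.tail_cons, Matrix.head_cons]
  · intro x y
    funext i
    fin_cases i <;> norm_num [brN2, DN2, Matrix.cons_val_succ, Matrix.cons_val_two, Matrix.tail_cons, Matrix.head_cons] <;> ring
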